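/- Let n be a natural number, let L be a real number, and let I₁, …, Iₙ be closed intervals Iᵢ = [aᵢ, aᵢ + ℓᵢ] in ℝ with ℓᵢ ≥ 0 for each i, and suppose L > ℓ₁ + ⋯ + ℓₙ. Set g = (L − (ℓ₁ + ⋯ + ℓₙ))/(n+1). Then there exists a real number t with 0 ≤ t and t + g ≤ L such that the open interval (t, t + g) is disjoint from every Iᵢ. -/

import Mathlib

theorem gap_aux : ∀ (n : ℕ) (L : ℝ) (a ℓ : Fin n → ℝ), (∀ i, 0 ≤ ℓ i) → (∑ i, ℓ i) < L →
    ∃ t : ℝ, 0 ≤ t ∧ t + (L - ∑ i, ℓ i) / (n + 1) ≤ L ∧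
      ∀ i x, x ∈ Set.Ioo t (t + (L - ∑ i, ℓ i) / (n + 1)) → x ∉ Set.Icc (a i) (a i + ℓ i)
  | 0, L, a, ℓ, h, hL => ⟨0, le_refl _, by simp, fun i => i.elim0⟩
  | (n+1), L, a, ℓ, h, hL => by
    obtain ⟨i₀, -, hi₀⟩ := Finset.exists_min_image Finset.univ a ⟨0, Finset.mem_univ 0⟩
    set S : ℝ := ∑ i, ℓ i with hS
    have hS0 : 0 ≤ S := Finset.sum_nonneg fun i _ => h i
    have hcast : ((n + 1 : ℕ) : ℝ) + 1 = (n : ℝ) + 2 := by push_cast; ring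
    set g : ℝ := (L - S) / ((n : ℝ) + 2) with hgdef
    have hn2 : (0:ℝ) < (n : ℝ) + 2 := by positivity
    have hgpos : 0 < g := by apply div_pos <;> linarith
    have hgval : g * ((n:ℝ) + 2) = L - S := by rw [hgdef]; exact div_mul_cancel₀ _ hn2.ne'
    have hgle : g ≤ L - S := by nlinarith
    have hrw : (L - S) / (((n+1:ℕ):ℝ) + 1) = g := by rw [hcast]
    rcases le_or_gt g (a i₀) with hc | hc
    · refine ⟨0, le_refl _, by rw [hrw]; linarith, fun i x hx hx' => ?_⟩
      rw [hrw] at hx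
      have h1 := hx.2
      have h2 := hx'.1
      have h3 := hi₀ i (Finset.mem_univ i)
      simp only [zero_add] at h1
      linarith
    · set r : ℝ := max 0 (a i₀ + ℓ i₀) with hrdef
      have hr0 : 0 ≤ r := le_max_left _ _
      have hri : a i₀ + ℓ i₀ ≤ r := le_max_right _ _
      have hrb : r - ℓ i₀ < g := by
        rcases le_total (a i₀ + ℓ i₀) 0 with h' | h'
        · have : r = 0 := max_eq_left h'
          have := h i₀
          linarith
        · have : r = a i₀ + ℓ i₀ := max_eq_right h'
          linarith
      have hsum : S = ℓ i₀ + ∑ j : Fin n, ℓ (i₀.succAbove j) := Fin.sum_univ_succAbove ℓ i₀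
      set S' : ℝ := ∑ j : Fin n, ℓ (i₀.succAbove j) with hS'
      have hLS' : S' < L - r := by linarith
      obtain ⟨t', ht'0, ht'le, ht'disj⟩ := gap_aux n (L - r)
        (fun j => a (i₀.succAbove j) - r) (fun j => ℓ (i₀.succAbove j))
        (fun j => h _) hLS'
      set g' : ℝ := (L - r - S') / ((n : ℝ) + 1) with hg'def
      have hn1 : (0:ℝ) < (n : ℝ) + 1 := by positivity
      have hgg' : g ≤ g' := by
        rw [hg'def, le_div_iff₀ hn1]
        nlinarith
      refine ⟨t' + r, by linarith, by rw [hrw]; linarith, fun i x hx hx' => ?_⟩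
      rw [hrw] at hx
      rcases eq_or_ne i i₀ with rfl | hne
      · have := hx'.2
        have := hx.1
        linarith
      · obtain ⟨j, rfl⟩ := Fin.exists_succAbove_eq hne
        refine ht'disj j (x - r) ⟨by linarith [hx.1], ?_⟩ ⟨by linarith [hx'.1], by linarith [hx'.2]⟩
        have : x < t' + r + g' := by linarith [hx.2]
        linarith

theorem quantitative_gap_bound (n : ℕ) (L : ℝ) (a ℓ : Fin n → ℝ)
    (hℓ : ∀ i : Fin n, ℓ i ≥ 0) (hL : L > ∑ i : Fin n, ℓ i) :
    ∃ t : ℝ, 0 ≤ t ∧ t + (L - ∑ i : Fin n, ℓ i) / (n + 1) ≤ L ∧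
      ∀ i : Fin n,
        Disjoint (Set.Ioo t (t + (L - ∑ i : Fin n, ℓ i) / (n + 1)))
          (Set.Icc (a i) (a i + ℓ i)) := by
  obtain ⟨t, h0, hle, hd⟩ := gap_aux n L a ℓ (fun i => hℓ i) hL
  exact ⟨t, h0, hle, fun i => Set.disjoint_left.mpr fun x hx => hd i x hx⟩
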